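/- Let n ≥ 3 and let η ∈ I_n be the idempotent partial permutation of rank n−1 that is the identity on {2, ..., n} and undefined at 1. If u = u₁ · η · u₂ and v = v₁ · η · v₂ are elements of I_n with u₁, v₁ ∈ S_n permutations and u₂, v₂ ∈ I_n arbitrary, u = v, and both u and v have rank n − 1, then u₁⁻¹ · v₁ fixes the point 1. -/

import Mathlib

/-- The symmetric inverse monoid `I_n` on `{1, ..., n}` is modelled by functions
`Fin (n+1) → Fin (n+1)` where `0` is a sink representing "undefined": `f 0 = 0`,
`f x = 0` means `x ∉ dom f`, and `f` is injective on its domain. Composition of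
partial maps is then left-to-right function composition. -/
def IsIn (n : ℕ) (f : Fin (n + 1) → Fin (n + 1)) : Prop :=
  f 0 = 0 ∧ ∀ x y : Fin (n + 1), f x = f y → f x ≠ 0 → x = y

/-- The rank of a partial permutation: the number of nonzero points in its image. -/
def prank (n : ℕ) (f : Fin (n + 1) → Fin (n + 1)) : ℕ :=
  ((Finset.univ.image f).erase 0).card

/-- The idempotent `η ∈ I_n` of rank `n - 1`: the identity on `{2, ..., n}`,
undefined at `1`. -/
def etaMap (n : ℕ) : Fin (n + 1) → Fin (n + 1) := fun x => if x = 1 then 0 else x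

/-- If `u = u₁ηu₂` and `v = v₁ηv₂` in `I_n` (products left-to-right) with `u₁, v₁`
permutations, `u = v`, and both have rank `n - 1`, then `u₁⁻¹v₁` fixes `1`. -/
theorem stmt10 (n : ℕ) (hn : 3 ≤ n)
    (u₁ v₁ : Equiv.Perm (Fin (n + 1))) (hu₁ : u₁ 0 = 0) (hv₁ : v₁ 0 = 0)
    (u₂ v₂ : Fin (n + 1) → Fin (n + 1)) (hu₂ : IsIn n u₂) (hv₂ : IsIn n v₂)
    (heq : (fun x => u₂ (etaMap n (u₁ x))) = (fun x => v₂ (etaMap n (v₁ x))))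
    (hru : prank n (fun x => u₂ (etaMap n (u₁ x))) = n - 1)
    (hrv : prank n (fun x => v₂ (etaMap n (v₁ x))) = n - 1) :
    v₁ (u₁⁻¹ (1 : Fin (n + 1))) = 1 := by
  by_contra hne
  have h10 : (1 : Fin (n + 1)) ≠ 0 := by
    simp [Fin.ext_iff, Fin.val_one]
    omega
  set w : Fin (n + 1) → Fin (n + 1) := fun x => v₂ (etaMap n (v₁ x)) with hw
  have hw0 : w 0 = 0 := by
    simp only [hw, hv₁, etaMap, if_neg (Ne.symm h10), hv₂.1]
  have hwv : w (v₁⁻¹ 1) = 0 := by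
    simp only [hw, Equiv.Perm.coe_inv, Equiv.apply_symm_apply, etaMap, if_pos rfl, if_true, hv₂.1]
  have hwu : w (u₁⁻¹ 1) = 0 := by
    have := congrFun heq (u₁⁻¹ 1)
    simp only [Equiv.Perm.coe_inv, Equiv.apply_symm_apply, etaMap, if_pos rfl, if_true, hu₂.1] at this
    exact this.symm
  have huv0 : u₁⁻¹ 1 ≠ 0 := by
    intro h
    apply h10
    rw [← hu₁, ← h, Equiv.Perm.coe_inv, Equiv.apply_symm_apply]
  have hvv0 : v₁⁻¹ 1 ≠ 0 := by
    intro h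
    apply h10
    rw [← hv₁, ← h, Equiv.Perm.coe_inv, Equiv.apply_symm_apply]
  have huvne : u₁⁻¹ 1 ≠ v₁⁻¹ 1 := by
    intro h
    apply hne
    rw [h, Equiv.Perm.coe_inv, Equiv.apply_symm_apply]
  have key : prank n w ≤ n - 2 := by
    have hsub : ((Finset.univ.image w).erase 0) ⊆
        ((Finset.univ \ {0, v₁⁻¹ 1, u₁⁻¹ 1} : Finset (Fin (n + 1))).image w) := by
      intro y hy
      simp only [Finset.mem_erase, Finset.mem_image, Finset.mem_univ, true_and] at hy
      obtain ⟨hy0, x, hx⟩ := hy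
      simp only [Finset.mem_image, Finset.mem_sdiff, Finset.mem_univ, true_and,
        Finset.mem_insert, Finset.mem_singleton]
      refine ⟨x, ?_, hx⟩
      push_neg
      refine ⟨?_, ?_, ?_⟩
      · rintro rfl; exact hy0 (by rw [← hx, hw0])
      · rintro rfl; exact hy0 (by rw [← hx, hwv])
      · rintro rfl; exact hy0 (by rw [← hx, hwu])
    have h1 : ((Finset.univ.image w).erase 0).card ≤
        ((Finset.univ \ {0, v₁⁻¹ 1, u₁⁻¹ 1} : Finset (Fin (n + 1))).image w).card :=
      Finset.card_le_card hsub
    have h2 : ((Finset.univ \ {0, v₁⁻¹ 1, u₁⁻¹ 1} : Finset (Fin (n + 1))).image w).card ≤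
        (Finset.univ \ {0, v₁⁻¹ 1, u₁⁻¹ 1} : Finset (Fin (n + 1))).card :=
      Finset.card_image_le
    have h3 : ({0, v₁⁻¹ 1, u₁⁻¹ 1} : Finset (Fin (n + 1))).card = 3 := by
      rw [Finset.card_insert_of_notMem, Finset.card_insert_of_notMem, Finset.card_singleton]
      · simp [-Equiv.Perm.coe_inv, Ne.symm huvne]
      · simp [-Equiv.Perm.coe_inv, Ne.symm hvv0, Ne.symm huvne, Ne.symm huv0]
    have h4 : (Finset.univ \ {0, v₁⁻¹ 1, u₁⁻¹ 1} : Finset (Fin (n + 1))).card = n + 1 - 3 := by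
      rw [Finset.card_sdiff_of_subset (Finset.subset_univ _), h3, Finset.card_univ, Fintype.card_fin]
    calc prank n w ≤ _ := h1
      _ ≤ _ := h2
      _ = n + 1 - 3 := h4
      _ ≤ n - 2 := by omega
  rw [hrv] at key
  omega
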